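/- Let $\mathbb{K}$ be a field of characteristic zero, let $n \geq 1$, $d \geq 2$, and let $J_d = (x_0^{d-1}, \dots, x_n^{d-1}) \subseteq \mathbb{K}[x_0,\dots,x_n]$. Then $H^{(n+1)(d-2)} \notin J_d$, where $H = \sum_{i=0}^n x_i$. -/

import Mathlib

open MvPolynomial

lemma prod_X_pow_eq_monomial' {σ R : Type*} [CommSemiring R] [Fintype σ] [DecidableEq σ]
    (k : σ → ℕ) :
    (∏ i : σ, (X i : MvPolynomial σ R) ^ k i)
      = monomial (Finsupp.equivFunOnFinite.symm k) 1 := by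
  rw [monic_monomial_eq, Finsupp.prod_fintype]
  · rfl
  · intro i; exact pow_zero _

/-- In characteristic zero, `H^((n+1)(d-2)) ∉ J_d = (x₀^(d-1), …, xₙ^(d-1))`,
where `H = x₀ + ⋯ + xₙ`. -/
theorem stmt6 {𝕂 : Type*} [Field 𝕂] [CharZero 𝕂] (n d : ℕ) (hn : 1 ≤ n) (hd : 2 ≤ d) :
    (∑ i : Fin (n + 1), (X i : MvPolynomial (Fin (n + 1)) 𝕂)) ^ ((n + 1) * (d - 2))
      ∉ Ideal.span (Set.range fun i : Fin (n + 1) =>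
          (X i : MvPolynomial (Fin (n + 1)) 𝕂) ^ (d - 1)) := by
  set m : Fin (n + 1) →₀ ℕ := Finsupp.equivFunOnFinite.symm (fun _ => d - 2) with hm
  intro hmem
  -- every element of the ideal has zero coefficient at m
  have hcoeff0 : coeff m ((∑ i : Fin (n + 1), (X i : MvPolynomial (Fin (n + 1)) 𝕂))
      ^ ((n + 1) * (d - 2))) = 0 := by
    obtain ⟨c, hc⟩ := (Ideal.mem_span_range_iff_exists_fun).mp hmem
    rw [← hc, coeff_sum]
    apply Finset.sum_eq_zero
    intro i _
    rw [coeff_mul]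
    apply Finset.sum_eq_zero
    rintro ⟨a, b⟩ hab
    rw [Finset.HasAntidiagonal.mem_antidiagonal] at hab
    rw [coeff_X_pow]
    split_ifs with h
    · exfalso
      have hb : b i = d - 1 := by rw [show b = Finsupp.single i (d-1) from h.symm]; simp
      have : m i = a i + b i := by rw [← hab]; rfl
      have hmi : m i = d - 2 := rfl
      omega
    · ring
  -- but the coefficient is the multinomial coefficient, nonzero
  have hcoeff : coeff m ((∑ i : Fin (n + 1), (X i : MvPolynomial (Fin (n + 1)) 𝕂))
      ^ ((n + 1) * (d - 2)))
      = (Nat.multinomial Finset.univ (fun _ : Fin (n + 1) => d - 2) : 𝕂) := by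
    rw [Finset.sum_pow_eq_sum_piAntidiag, coeff_sum]
    rw [Finset.sum_eq_single (fun _ : Fin (n + 1) => d - 2)]
    · rw [prod_X_pow_eq_monomial', ← hm, ← C_eq_coe_nat, coeff_C_mul, coeff_monomial,
        if_pos rfl, mul_one]
    · intro k hk hne
      rw [prod_X_pow_eq_monomial', ← C_eq_coe_nat, coeff_C_mul, coeff_monomial, if_neg, mul_zero]
      intro h
      exact hne (by simpa [hm] using congrArg Finsupp.equivFunOnFinite h)
    · intro h
      exfalso
      apply h
      rw [Finset.mem_piAntidiag]
      constructor
      · simp [Finset.sum_const, mul_comm]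
      · intro i _; exact Finset.mem_univ i
  rw [hcoeff] at hcoeff0
  have := Nat.multinomial_pos (s := (Finset.univ : Finset (Fin (n + 1))))
    (f := fun _ => d - 2)
  exact_mod_cast absurd hcoeff0 (by exact_mod_cast this.ne')
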